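/- Let d ≥ 1 and let ν be a translation-invariant probability measure on the space {0,1}^{→E^d} of directed nearest-neighbor edge configurations on ℤ^d such that ν-almost surely the configuration graph G has out-degree one and is undirected-acyclic. Then ν-almost surely the following holds: for every weak component C of G, the backbone B(C) = {x ∈ C : the backward cluster C^b_x is infinite} is either empty, or there is a bijection γ : ℤ → B(C) such that ⟨γ(i), γ(i+1)⟩ is a directed edge of G for every i ∈ ℤ (that is, B(C) is a doubly-infinite directed path). -/

import Mathlib

open MeasureTheory

/-- Vertices of the `d`-dimensional lattice. -/
abbrev Vtx (d : ℕ) := Fin d → ℤ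

/-- ℓ¹-distance on `ℤ^d`. -/
def dist1 {d : ℕ} (x y : Vtx d) : ℤ := ∑ i, |x i - y i|

/-- A directed nearest-neighbor edge configuration on `ℤ^d` (the value is only relevant
on pairs at ℓ¹-distance one). -/
abbrev DConfig (d : ℕ) := Vtx d → Vtx d → Bool

/-- `⟨x,y⟩` is a directed edge of the configuration graph `G` of `η`. -/
def DEdge {d : ℕ} (η : DConfig d) (x y : Vtx d) : Prop :=
  dist1 x y = 1 ∧ η x y = true

/-- Translation of a directed configuration by `z`. -/
def shiftD {d : ℕ} (z : Vtx d) (η : DConfig d) : DConfig d :=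
  fun x y => η (x + z) (y + z)

/-- There is a directed path in `G` from `y` to `x`. -/
def Reaches {d : ℕ} (η : DConfig d) : Vtx d → Vtx d → Prop :=
  Relation.ReflTransGen (DEdge η)

/-- The backward cluster of `x`. -/
def bwdCluster {d : ℕ} (η : DConfig d) (x : Vtx d) : Set (Vtx d) :=
  {y | Reaches η y x}

/-- Adjacency in the underlying undirected graph. -/
def UAdj {d : ℕ} (η : DConfig d) (x y : Vtx d) : Prop :=
  DEdge η x y ∨ DEdge η y x

/-- `x` and `y` lie in the same weak component. -/
def WeakConn {d : ℕ} (η : DConfig d) : Vtx d → Vtx d → Prop :=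
  Relation.ReflTransGen (UAdj η)

namespace S0
variable {d : ℕ}

lemma dist1_self (x : Vtx d) : dist1 x x = 0 := by simp [dist1]

lemma dedge_ne {η : DConfig d} {x y : Vtx d} (h : DEdge η x y) : x ≠ y := by
  rintro rfl; simpa [dist1_self] using h.1

lemma dist1_shift (x y z : Vtx d) : dist1 (x + z) (y + z) = dist1 x y := by
  unfold dist1; apply Finset.sum_congr rfl; intro i _
  simp [add_sub_add_right_eq_sub]

lemma bwd_mono {η : DConfig d} {x y : Vtx d} (h : DEdge η x y) :
    bwdCluster η x ⊆ bwdCluster η y := fun _ hz => Relation.ReflTransGen.tail hz h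

lemma bwd_inf_succ {η : DConfig d} {x y : Vtx d} (h : DEdge η x y)
    (hx : (bwdCluster η x).Infinite) : (bwdCluster η y).Infinite :=
  hx.mono (bwd_mono h)

lemma sphere_finite (x : Vtx d) : {y : Vtx d | dist1 y x = 1}.Finite := by
  apply Set.Finite.subset (Set.Finite.pi (fun i : Fin d => Set.finite_Icc (x i - 1) (x i + 1)))
  intro y hy
  simp only [Set.mem_pi, Set.mem_univ, Set.mem_Icc, forall_true_left]
  intro i
  have h1 : |y i - x i| ≤ 1 := by
    have := Finset.single_le_sum (f := fun j => |y j - x j|)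
      (fun j _ => abs_nonneg _) (Finset.mem_univ i)
    rw [show (∑ j, |y j - x j|) = dist1 y x from rfl, hy] at this
    exact this
  have := abs_le.mp h1
  omega

lemma exists_in_nbr {η : DConfig d} {x : Vtx d} (hx : (bwdCluster η x).Infinite) :
    ∃ y, DEdge η y x ∧ (bwdCluster η y).Infinite := by
  by_contra h
  push_neg at h
  have hsub : bwdCluster η x ⊆ {x} ∪ ⋃ y ∈ {y : Vtx d | DEdge η y x}, bwdCluster η y := by
    intro z hz
    rcases Relation.ReflTransGen.cases_tail hz with h' | ⟨c, hzc, hcx⟩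
    · exact Or.inl (by simp [h'])
    · exact Or.inr (Set.mem_biUnion hcx hzc)
  have hfin : ({x} ∪ ⋃ y ∈ {y : Vtx d | DEdge η y x}, bwdCluster η y).Finite := by
    apply (Set.finite_singleton x).union
    apply Set.Finite.biUnion ((sphere_finite x).subset (fun y hy => hy.1))
    intro y hy
    exact h y hy
  exact hx (hfin.subset hsub)


lemma shiftD_dedge (z : Vtx d) (η : DConfig d) (x y : Vtx d) :
    DEdge (shiftD z η) x y ↔ DEdge η (x + z) (y + z) := by
  simp [DEdge, shiftD, dist1_shift]

lemma shiftD_reaches (z : Vtx d) (η : DConfig d) (a b : Vtx d) :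
    Reaches (shiftD z η) a b ↔ Reaches η (a + z) (b + z) := by
  constructor
  · intro h
    exact Relation.ReflTransGen.lift (fun v => v + z)
      (fun u v huv => (shiftD_dedge z η u v).mp huv) _ _ h
  · intro h
    have := Relation.ReflTransGen.lift (p := DEdge (shiftD z η)) (fun v => v - z)
      (fun u v (huv : DEdge η u v) => by
        show DEdge (shiftD z η) (u - z) (v - z)
        rw [shiftD_dedge]
        simpa [sub_add_cancel] using huv) _ _ h
    simpa [Reaches, Function.onFun, add_sub_cancel_right] using this

lemma shiftD_bwd (z : Vtx d) (η : DConfig d) (x : Vtx d) :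
    bwdCluster (shiftD z η) x = (fun a => a + z) ⁻¹' bwdCluster η (x + z) := by
  ext a; simp [bwdCluster, shiftD_reaches, Set.mem_preimage]

lemma shiftD_bwdInf (z : Vtx d) (η : DConfig d) (x : Vtx d) :
    (bwdCluster (shiftD z η) x).Infinite ↔ (bwdCluster η (x + z)).Infinite := by
  rw [shiftD_bwd]
  rw [show (fun a : Vtx d => a + z) ⁻¹' bwdCluster η (x + z)
      = (Equiv.addRight z).symm '' bwdCluster η (x + z) by
    rw [Equiv.image_eq_preimage_symm]; rfl]
  constructor
  · exact fun h => h.of_image _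
  · exact fun h => h.image (Equiv.injective _).injOn

lemma meas_edge (x y : Vtx d) : MeasurableSet {η : DConfig d | DEdge η x y} := by
  have : {η : DConfig d | DEdge η x y}
      = (fun η : DConfig d => η x y) ⁻¹' {b : Bool | dist1 x y = 1 ∧ b = true} := rfl
  rw [this]
  exact ((measurable_pi_apply y).comp (measurable_pi_apply x)) trivial

lemma meas_chain (l : List (Vtx d)) : ∀ a : Vtx d,
    MeasurableSet {η : DConfig d | List.Chain (DEdge η) a l} := by
  induction l with
  | nil => intro a; simp [List.Chain]
  | cons b l ih =>
    intro a
    have : {η : DConfig d | List.Chain (DEdge η) a (b :: l)}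
        = {η | DEdge η a b} ∩ {η | List.Chain (DEdge η) b l} := by
      ext η; simp [List.Chain]
    rw [this]
    exact (meas_edge a b).inter (ih b)

lemma reaches_iff_chain (η : DConfig d) (y x : Vtx d) :
    Reaches η y x ↔ ∃ l : List (Vtx d),
      List.Chain (DEdge η) y l ∧ (y :: l).getLast (List.cons_ne_nil _ _) = x := by
  constructor
  · exact fun h => List.exists_isChain_cons_of_relationReflTransGen h
  · rintro ⟨l, h1, h2⟩; exact List.relationReflTransGen_of_exists_isChain_cons l h1 h2

lemma meas_reaches (y x : Vtx d) : MeasurableSet {η : DConfig d | Reaches η y x} := by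
  have : {η : DConfig d | Reaches η y x}
      = ⋃ l : List (Vtx d),
          (if (y :: l).getLast (List.cons_ne_nil _ _) = x then
            {η : DConfig d | List.Chain (DEdge η) y l} else ∅) := by
    ext η
    simp only [Set.mem_iUnion, Set.mem_setOf_eq, reaches_iff_chain]
    constructor
    · rintro ⟨l, h1, h2⟩; exact ⟨l, by rw [if_pos h2]; exact h1⟩
    · rintro ⟨l, hl⟩
      by_cases h : (y :: l).getLast (List.cons_ne_nil _ _) = x
      · rw [if_pos h] at hl; exact ⟨l, hl, h⟩
      · rw [if_neg h] at hl; exact absurd hl (Set.notMem_empty η)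
  rw [this]
  refine MeasurableSet.iUnion fun l => ?_
  split
  · exact meas_chain l y
  · exact MeasurableSet.empty

lemma meas_bwdInf (x : Vtx d) :
    MeasurableSet {η : DConfig d | (bwdCluster η x).Infinite} := by
  have hfin : {η : DConfig d | (bwdCluster η x).Finite}
      = ⋃ T : Finset (Vtx d), ⋂ z : Vtx d, {η | Reaches η z x → z ∈ T} := by
    ext η
    simp only [Set.mem_iUnion, Set.mem_iInter, Set.mem_setOf_eq]
    constructor
    · intro h
      exact ⟨h.toFinset, fun z hz => by rwa [Set.Finite.mem_toFinset]⟩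
    · rintro ⟨T, hT⟩
      exact T.finite_toSet.subset (fun z hz => hT z hz)
  have h2 : MeasurableSet {η : DConfig d | (bwdCluster η x).Finite} := by
    rw [hfin]
    refine MeasurableSet.iUnion fun T => MeasurableSet.iInter fun z => ?_
    have : {η : DConfig d | Reaches η z x → z ∈ T}
        = {η | Reaches η z x}ᶜ ∪ (if z ∈ T then Set.univ else ∅) := by
      ext η
      by_cases hz : z ∈ T <;> simp [hz]
    rw [this]
    refine ((meas_reaches z x).compl).union ?_
    split
    · exact MeasurableSet.univ
    · exact MeasurableSet.empty
  have : {η : DConfig d | (bwdCluster η x).Infinite}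
      = {η : DConfig d | (bwdCluster η x).Finite}ᶜ := by
    ext η; exact Iff.rfl
  rw [this]
  exact h2.compl

def Eset (x y : Vtx d) : Set (DConfig d) :=
  {η | DEdge η x y ∧ (bwdCluster η x).Infinite ∧ (bwdCluster η y).Infinite}

lemma meas_Eset (x y : Vtx d) : MeasurableSet (Eset x y) := by
  have : Eset x y = {η : DConfig d | DEdge η x y}
      ∩ ({η | (bwdCluster η x).Infinite} ∩ {η | (bwdCluster η y).Infinite}) := rfl
  rw [this]
  exact (meas_edge x y).inter ((meas_bwdInf x).inter (meas_bwdInf y))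

lemma shift_Eset (z x y : Vtx d) :
    shiftD z ⁻¹' Eset x y = Eset (x + z) (y + z) := by
  ext η
  simp [Eset, Set.mem_preimage, shiftD_dedge, shiftD_bwdInf]
def BadSet (x : Vtx d) : Set (DConfig d) :=
  ⋃ p : Vtx d × Vtx d, if p.1 ≠ p.2 then Eset p.1 x ∩ Eset p.2 x else ∅

lemma meas_BadSet (x : Vtx d) : MeasurableSet (BadSet x) := by
  refine MeasurableSet.iUnion fun p => ?_
  split
  · exact (meas_Eset p.1 x).inter (meas_Eset p.2 x)
  · exact MeasurableSet.empty

lemma mem_BadSet {η : DConfig d} {x : Vtx d} :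
    η ∈ BadSet x ↔ ∃ y₁ y₂ : Vtx d, y₁ ≠ y₂ ∧ η ∈ Eset y₁ x ∧ η ∈ Eset y₂ x := by
  constructor
  · rintro ⟨S, ⟨p, rfl⟩, hS⟩
    simp only at hS
    by_cases hp : p.1 ≠ p.2
    · rw [if_pos hp] at hS; exact ⟨p.1, p.2, hp, hS.1, hS.2⟩
    · rw [if_neg hp] at hS; exact absurd hS (Set.notMem_empty η)
  · rintro ⟨y₁, y₂, hne, h1, h2⟩
    exact Set.mem_iUnion.mpr ⟨(y₁, y₂), by rw [if_pos hne]; exact ⟨h1, h2⟩⟩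

lemma shift_BadSet (x : Vtx d) : shiftD x ⁻¹' BadSet 0 = BadSet x := by
  ext η
  have hE : ∀ y : Vtx d, (shiftD x η ∈ Eset y 0) ↔ η ∈ Eset (y + x) x := by
    intro y
    have := shift_Eset (d := d) x y 0
    constructor
    · intro h
      have : η ∈ shiftD x ⁻¹' Eset y 0 := h
      rw [shift_Eset] at this; simpa using this
    · intro h
      have : η ∈ Eset (y + x) (0 + x) := by simpa using h
      rw [← shift_Eset] at this; exact this
  constructor
  · intro h
    obtain ⟨y₁, y₂, hne, h1, h2⟩ := mem_BadSet.mp h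
    exact mem_BadSet.mpr ⟨y₁ + x, y₂ + x, by
      simpa using fun hc => hne (by
        have : y₁ + x - x = y₂ + x - x := by rw [hc]
        simpa using this), (hE y₁).mp h1, (hE y₂).mp h2⟩
  · intro h
    obtain ⟨y₁, y₂, hne, h1, h2⟩ := mem_BadSet.mp h
    refine mem_BadSet.mpr ⟨y₁ - x, y₂ - x, fun hc => hne (by
      have : y₁ - x + x = y₂ - x + x := by rw [hc]
      simpa using this), ?_, ?_⟩
    · exact (hE (y₁ - x)).mpr (by simpa using h1)
    · exact (hE (y₂ - x)).mpr (by simpa using h2)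

open scoped ENNReal

lemma sum_in_eq_sum_out (ν : Measure (DConfig d))
    (hinv : ∀ z : Vtx d, MeasurePreserving (shiftD z) ν ν) :
    ∑' y : Vtx d, ν (Eset y 0) = ∑' y : Vtx d, ν (Eset 0 y) := by
  have hms : ∀ z x y : Vtx d, ν (Eset (x + z) (y + z)) = ν (Eset x y) := by
    intro z x y
    rw [← shift_Eset, (hinv z).measure_preimage (meas_Eset x y).nullMeasurableSet]
  have h1 : ∀ y : Vtx d, ν (Eset y 0) = ν (Eset 0 (-y)) := by
    intro y
    have := hms (-y) y 0
    simpa using this.symm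
  calc ∑' y : Vtx d, ν (Eset y 0) = ∑' y : Vtx d, ν (Eset 0 (-y)) := tsum_congr h1
  _ = ∑' y : Vtx d, ν (Eset 0 y) := (Equiv.neg (Vtx d)).tsum_eq (fun y => ν (Eset 0 y))

lemma mem_Eset {η : DConfig d} {x y : Vtx d} :
    η ∈ Eset x y ↔ DEdge η x y ∧ (bwdCluster η x).Infinite ∧ (bwdCluster η y).Infinite :=
  Iff.rfl

set_option maxHeartbeats 1000000 in
lemma ae_nobad (ν : Measure (DConfig d)) [IsProbabilityMeasure ν]
    (hinv : ∀ z : Vtx d, MeasurePreserving (shiftD z) ν ν)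
    (hgood1 : ∀ᵐ η ∂ν, ∀ x : Vtx d, ∃! y : Vtx d, DEdge η x y) :
    ∀ᵐ η ∂ν, ∀ x : Vtx d, η ∉ BadSet x := by
  set I0 : Set (DConfig d) := {η : DConfig d | (bwdCluster η (0 : Vtx d)).Infinite} with hI0
  have memI0 : ∀ η : DConfig d, η ∈ I0 ↔ (bwdCluster η (0 : Vtx d)).Infinite := fun _ => Iff.rfl
  set Nin : DConfig d → ℝ≥0∞ :=
    fun η => ∑' y : Vtx d, (Eset y 0).indicator (fun _ => (1 : ℝ≥0∞)) η with hNindef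
  set ind : DConfig d → ℝ≥0∞ := I0.indicator (fun _ => (1 : ℝ≥0∞)) with hinddef
  have hmNin : Measurable Nin :=
    Measurable.ennreal_tsum (fun y => measurable_const.indicator (meas_Eset y 0))
  have hmind : Measurable ind := measurable_const.indicator (meas_bwdInf 0)
  have hNin_int : ∫⁻ η, Nin η ∂ν = ∑' y : Vtx d, ν (Eset y 0) := by
    rw [hNindef,
      lintegral_tsum (fun y => (measurable_const.indicator (meas_Eset y 0)).aemeasurable)]
    exact tsum_congr fun y => by
      rw [lintegral_indicator_const (meas_Eset y 0), one_mul]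
  have hNout_int : ∫⁻ η, (∑' y : Vtx d, (Eset 0 y).indicator (fun _ => (1 : ℝ≥0∞)) η) ∂ν
      = ∑' y : Vtx d, ν (Eset 0 y) := by
    rw [lintegral_tsum (fun y => (measurable_const.indicator (meas_Eset 0 y)).aemeasurable)]
    exact tsum_congr fun y => by
      rw [lintegral_indicator_const (meas_Eset 0 y), one_mul]
  have hind_int : ∫⁻ η, ind η ∂ν = ν I0 := by
    rw [hinddef, lintegral_indicator_const (meas_bwdInf 0), one_mul]
  have hout_eq : ∀ᵐ η ∂ν, (∑' y : Vtx d, (Eset 0 y).indicator (fun _ => (1 : ℝ≥0∞)) η)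
      = ind η := by
    filter_upwards [hgood1] with η h1
    by_cases h0 : (bwdCluster η (0 : Vtx d)).Infinite
    · obtain ⟨w, hw, hwu⟩ := h1 0
      have hterm : ∀ y : Vtx d, (Eset 0 y).indicator (fun _ => (1 : ℝ≥0∞)) η
          = if y = w then 1 else 0 := by
        intro y
        by_cases hyw : y = w
        · subst hyw
          rw [if_pos rfl, Set.indicator_of_mem (mem_Eset.mpr ⟨hw, h0, bwd_inf_succ hw h0⟩)]
        · rw [if_neg hyw, Set.indicator_of_notMem (fun hmem => hyw (hwu y (mem_Eset.mp hmem).1))]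
      rw [tsum_congr hterm, tsum_ite_eq, hinddef,
        Set.indicator_of_mem ((memI0 η).mpr h0)]
    · have hterm : ∀ y : Vtx d, (Eset 0 y).indicator (fun _ => (1 : ℝ≥0∞)) η = 0 :=
        fun y => Set.indicator_of_notMem (fun hmem => h0 (mem_Eset.mp hmem).2.1) _
      rw [tsum_congr hterm, tsum_zero, hinddef,
        Set.indicator_of_notMem (fun hmem => h0 ((memI0 η).mp hmem))]
  have hle : ∀ η, ind η ≤ Nin η := by
    intro η
    by_cases h0 : (bwdCluster η (0 : Vtx d)).Infinite
    · obtain ⟨y, hy, hyB⟩ := exists_in_nbr h0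
      have h1 : (Eset y 0).indicator (fun _ => (1 : ℝ≥0∞)) η = 1 :=
        Set.indicator_of_mem (mem_Eset.mpr ⟨hy, hyB, h0⟩) _
      have h2 : ind η = 1 := Set.indicator_of_mem ((memI0 η).mpr h0) _
      rw [h2, ← h1]
      exact ENNReal.le_tsum y
    · rw [hinddef, Set.indicator_of_notMem (fun hmem => h0 ((memI0 η).mp hmem))]
      exact zero_le
  have heq_int : ∫⁻ η, Nin η ∂ν = ∫⁻ η, ind η ∂ν := by
    rw [hNin_int, sum_in_eq_sum_out ν hinv, ← hNout_int]
    exact lintegral_congr_ae hout_eq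
  have hfin : ∫⁻ η, ind η ∂ν ≠ ⊤ := by
    rw [hind_int]; exact measure_ne_top ν _
  have hsub : ∫⁻ η, (Nin η - ind η) ∂ν = 0 := by
    rw [lintegral_sub hmind hfin (ae_of_all _ hle), heq_int, tsub_self]
  have hz : (fun η => Nin η - ind η) =ᵐ[ν] 0 :=
    (lintegral_eq_zero_iff (hmNin.sub hmind)).mp hsub
  have hbad0 : ∀ᵐ η ∂ν, η ∉ BadSet (0 : Vtx d) := by
    filter_upwards [hz] with η hη hmem
    obtain ⟨y₁, y₂, hne, h1, h2⟩ := mem_BadSet.mp hmem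
    have h0 : (bwdCluster η (0 : Vtx d)).Infinite := (mem_Eset.mp h1).2.2
    have hind1 : ind η = 1 := Set.indicator_of_mem ((memI0 η).mpr h0) _
    have h2le : (2 : ℝ≥0∞) ≤ Nin η := by
      have := ENNReal.sum_le_tsum
        (f := fun y : Vtx d => (Eset y 0).indicator (fun _ => (1 : ℝ≥0∞)) η) {y₁, y₂}
      rw [Finset.sum_pair hne, Set.indicator_of_mem h1, Set.indicator_of_mem h2] at this
      simpa [one_add_one_eq_two] using this
    have hNle : Nin η ≤ ind η := by
      have hη' : Nin η - ind η = 0 := hη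
      exact tsub_eq_zero_iff_le.mp hη'
    rw [hind1] at hNle
    have : (2 : ℝ≥0∞) ≤ 1 := le_trans h2le hNle
    norm_num at this
  have hnull0 : ν (BadSet (0 : Vtx d)) = 0 := measure_eq_zero_iff_ae_notMem.mpr hbad0
  have hnullx : ∀ x : Vtx d, ν (BadSet x) = 0 := by
    intro x
    rw [← shift_BadSet x, (hinv x).measure_preimage (meas_BadSet 0).nullMeasurableSet]
    exact hnull0
  have hU : ν (⋃ x : Vtx d, BadSet x) = 0 := measure_iUnion_null hnullx
  filter_upwards [measure_eq_zero_iff_ae_notMem.mp hU] with η hη x hx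
  exact hη (Set.mem_iUnion.mpr ⟨x, hx⟩)
lemma walk_of_chain {V : Type*} (G : SimpleGraph V) (v : ℕ → V) :
    ∀ n : ℕ, (∀ i, i < n → G.Adj (v i) (v (i+1))) →
      ∃ w : G.Walk (v 0) (v n), w.support = (List.range (n+1)).map v := by
  intro n
  induction n with
  | zero => exact fun _ => ⟨SimpleGraph.Walk.nil, by simp [List.range_succ]⟩
  | succ n ih =>
    intro h
    obtain ⟨w, hw⟩ := ih (fun i hi => h i (Nat.lt_succ_of_lt hi))
    refine ⟨w.concat (h n (Nat.lt_succ_self n)), ?_⟩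
    rw [SimpleGraph.Walk.support_concat, hw, List.range_succ (n := n + 1)]
    simp

lemma no_cycle {η : DConfig d}
    (h2 : ∀ x y : Vtx d, ¬ (DEdge η x y ∧ DEdge η y x))
    (h3 : (SimpleGraph.fromRel (DEdge η)).IsAcyclic)
    (f : Vtx d → Vtx d) (hf : ∀ v, DEdge η v (f v)) (a : Vtx d) :
    ∀ k : ℕ, 1 ≤ k → f^[k] a ≠ a := by
  intro k hk hcyc
  have hex : ∃ n, 1 ≤ n ∧ f^[n] a = a := ⟨k, hk, hcyc⟩
  classical
  set k₀ := Nat.find hex with hk₀def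
  obtain ⟨hk₀1, hk₀cyc⟩ : 1 ≤ k₀ ∧ f^[k₀] a = a := Nat.find_spec hex
  have hmin : ∀ m, m < k₀ → ¬(1 ≤ m ∧ f^[m] a = a) := fun m hm => Nat.find_min hex hm
  have hdist : ∀ i j, i < j → j < k₀ → f^[i] a ≠ f^[j] a := by
    intro i j hij hj heq
    have h1 : f^[(k₀ - j) + i] a = a := by
      rw [Function.iterate_add_apply, heq, ← Function.iterate_add_apply]
      have hjj : k₀ - j + j = k₀ := by omega
      rw [hjj, hk₀cyc]
    exact hmin ((k₀ - j) + i) (by omega) ⟨by omega, h1⟩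
  have hdist2 : ∀ i, 1 ≤ i → i < k₀ → f^[i] a ≠ a :=
    fun i hi1 hi2 heq => hmin i hi2 ⟨hi1, heq⟩
  rcases Nat.lt_or_ge k₀ 3 with hsmall | hbig
  · interval_cases k₀
    · have h1 : f a = a := by simpa using hk₀cyc
      have hfa := hf a
      rw [h1] at hfa
      exact dedge_ne hfa rfl
    · refine h2 a (f a) ⟨hf a, ?_⟩
      have hffa : f (f a) = a := by
        have := hk₀cyc
        simpa [Function.iterate_succ_apply'] using this
      have := hf (f a)
      rwa [hffa] at this
  · set G' := SimpleGraph.fromRel (DEdge η) with hG'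
    set v : ℕ → Vtx d := fun i => f^[i+1] a with hv
    have hstep : ∀ i : ℕ, v (i+1) = f (v i) := by
      intro i
      rw [hv]
      simp [Function.iterate_succ_apply']
    have hinj : ∀ i j, i < k₀ → j < k₀ → v i = v j → i = j := by
      intro i j hi hj heq
      rcases lt_trichotomy i j with h | h | h
      · exfalso
        rcases Nat.lt_or_ge (j+1) k₀ with hj1 | hj1
        · exact hdist (i+1) (j+1) (by omega) hj1 heq
        · have hjk : j + 1 = k₀ := by omega
          have : v j = a := by rw [hv]; simp only; rw [hjk, hk₀cyc]
          rw [this] at heq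
          exact hdist2 (i+1) (by omega) (by omega) heq
      · exact h
      · exfalso
        rcases Nat.lt_or_ge (i+1) k₀ with hi1 | hi1
        · exact hdist (j+1) (i+1) (by omega) hi1 heq.symm
        · have hik : i + 1 = k₀ := by omega
          have : v i = a := by rw [hv]; simp only; rw [hik, hk₀cyc]
          rw [this] at heq
          exact hdist2 (j+1) (by omega) (by omega) heq.symm
    have hadj : ∀ i, i < k₀ - 1 → G'.Adj (v i) (v (i+1)) := by
      intro i hi
      rw [SimpleGraph.fromRel_adj]
      refine ⟨fun heq => by have := hinj i (i+1) (by omega) (by omega) heq; omega, ?_⟩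
      exact Or.inl (by rw [hstep i]; exact hf (v i))
    obtain ⟨w, hwsupp⟩ := walk_of_chain G' v (k₀ - 1) hadj
    have hvlast : v (k₀ - 1) = a := by
      rw [hv]; simp only
      rw [show k₀ - 1 + 1 = k₀ by omega, hk₀cyc]
    have hv0 : v 0 = f a := by rw [hv]; simp
    have hnodup : ((List.range (k₀ - 1 + 1)).map v).Nodup := by
      refine List.Nodup.map_on ?_ List.nodup_range
      intro x hx y hy hxy
      rw [List.mem_range] at hx hy
      exact hinj x y (by omega) (by omega) hxy
    have hpath : w.IsPath := by
      rw [SimpleGraph.Walk.isPath_def, hwsupp]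
      exact hnodup
    have hfa_ne : f a ≠ a := fun h => hdist2 1 le_rfl (by omega) (by simpa using h)
    have hadj0 : G'.Adj (f a) a := by
      rw [SimpleGraph.fromRel_adj]
      exact ⟨hfa_ne, Or.inr (hf a)⟩
    let w' : G'.Walk (f a) a := (w.copy hv0 hvlast)
    have hw'path : w'.IsPath := by
      rw [SimpleGraph.Walk.isPath_def, SimpleGraph.Walk.support_copy, hwsupp]
      exact hnodup
    let p : G'.Path (f a) a := ⟨w', hw'path⟩
    let q : G'.Path (f a) a := SimpleGraph.Path.singleton hadj0
    have hpq : p = q := SimpleGraph.isAcyclic_iff_path_unique.mp h3 p q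
    have hweq : w' = (q : G'.Walk (f a) a) := congrArg Subtype.val hpq
    have hlenw : w'.length = k₀ - 1 := by
      have hsl := SimpleGraph.Walk.length_support w'
      rw [SimpleGraph.Walk.support_copy, hwsupp] at hsl
      simp only [List.length_map, List.length_range] at hsl
      omega
    have hlenq : (q : G'.Walk (f a) a).length = 1 := rfl
    rw [hweq, hlenq] at hlenw
    omega
lemma det (η : DConfig d)
    (h1 : ∀ x : Vtx d, ∃! y : Vtx d, DEdge η x y)
    (h2 : ∀ x y : Vtx d, ¬ (DEdge η x y ∧ DEdge η y x))
    (h3 : (SimpleGraph.fromRel (DEdge η)).IsAcyclic)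
    (h4 : ∀ x y₁ y₂ : Vtx d, y₁ ≠ y₂ → η ∈ Eset y₁ x → η ∈ Eset y₂ x → False)
    (x : Vtx d) :
    {y | WeakConn η x y ∧ (bwdCluster η y).Infinite} = ∅ ∨
      ∃ γ : ℤ → Vtx d, Function.Injective γ ∧
        Set.range γ = {y | WeakConn η x y ∧ (bwdCluster η y).Infinite} ∧
        ∀ i : ℤ, DEdge η (γ i) (γ (i + 1)) := by
  classical
  set B : Vtx d → Prop := fun v => (bwdCluster η v).Infinite with hBdef
  by_cases hS : {y | WeakConn η x y ∧ (bwdCluster η y).Infinite} = ∅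
  · exact Or.inl hS
  right
  obtain ⟨y₀, hy₀⟩ := Set.nonempty_iff_ne_empty.mpr hS
  simp only [Set.mem_setOf_eq] at hy₀
  set f : Vtx d → Vtx d := fun v => (h1 v).choose with hfdef
  have hf : ∀ v, DEdge η v (f v) := fun v => (h1 v).choose_spec.1
  have hfu : ∀ v w, DEdge η v w → w = f v := fun v w h => (h1 v).choose_spec.2 w h
  have hfB : ∀ v, B v → B (f v) := fun v hv => bwd_inf_succ (hf v) hv
  have h4' : ∀ v, B v → ∃! w, DEdge η w v ∧ B w := by
    intro v hv
    obtain ⟨w, hw1, hw2⟩ := exists_in_nbr hv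
    refine ⟨w, ⟨hw1, hw2⟩, ?_⟩
    intro w' hw'
    by_contra hne
    exact h4 v w' w hne (mem_Eset.mpr ⟨hw'.1, hw'.2, hv⟩) (mem_Eset.mpr ⟨hw1, hw2, hv⟩)
  set g : Vtx d → Vtx d := fun v => if h : B v then (h4' v h).choose else v with hgdef
  have hg : ∀ v, B v → DEdge η (g v) v ∧ B (g v) := by
    intro v hv
    rw [hgdef]; simp only [dif_pos hv]
    exact (h4' v hv).choose_spec.1
  have hgu : ∀ v, B v → ∀ w, DEdge η w v → B w → w = g v := by
    intro v hv w hw hwB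
    rw [hgdef]; simp only [dif_pos hv]
    exact (h4' v hv).choose_spec.2 w ⟨hw, hwB⟩
  have hgf : ∀ v, B v → g (f v) = v := fun v hv => (hgu (f v) (hfB v hv) v (hf v) hv).symm
  have hfg : ∀ v, B v → f (g v) = v := fun v hv => (hfu (g v) v (hg v hv).1).symm
  set γ : ℤ → Vtx d := fun n => if 0 ≤ n then f^[n.toNat] y₀ else g^[(-n).toNat] y₀ with hγdef
  have hγnat : ∀ k : ℕ, γ (k : ℤ) = f^[k] y₀ := by
    intro k; rw [hγdef]; simp
  have hγneg : ∀ k : ℕ, γ (-(k : ℤ)) = g^[k] y₀ := by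
    intro k
    rcases Nat.eq_zero_or_pos k with rfl | hk
    · rw [hγdef]; simp
    · rw [hγdef]
      simp only
      rw [if_neg (by omega), neg_neg]
      simp
  have hy₀B : B y₀ := hy₀.2
  have hfkB : ∀ k : ℕ, B (f^[k] y₀) := by
    intro k; induction k with
    | zero => simpa using hy₀B
    | succ k ih => rw [Function.iterate_succ_apply']; exact hfB _ ih
  have hgkB : ∀ k : ℕ, B (g^[k] y₀) := by
    intro k; induction k with
    | zero => simpa using hy₀B
    | succ k ih => rw [Function.iterate_succ_apply']; exact (hg _ ih).2
  have hγB : ∀ n : ℤ, B (γ n) := by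
    intro n
    rcases Int.eq_nat_or_neg n with ⟨k, rfl | rfl⟩
    · rw [hγnat]; exact hfkB k
    · rw [hγneg]; exact hgkB k
  have hstep : ∀ n : ℤ, γ (n + 1) = f (γ n) := by
    intro n
    rcases le_or_gt 0 n with hn | hn
    · lift n to ℕ using hn
      rw [show ((n:ℤ) + 1) = ((n+1 : ℕ) : ℤ) by push_cast; ring, hγnat, hγnat,
        Function.iterate_succ_apply']
    · obtain ⟨k, rfl⟩ : ∃ k : ℕ, n = -((k+1 : ℕ) : ℤ) := ⟨(-n).toNat - 1, by omega⟩
      have h1 : γ (-((k+1:ℕ):ℤ)) = g^[k+1] y₀ := hγneg (k+1)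
      have h2 : (-((k+1:ℕ):ℤ) + 1) = -((k:ℕ):ℤ) := by push_cast; ring
      rw [h2, hγneg k, h1, Function.iterate_succ_apply']
      exact (hfg _ (hgkB k)).symm
  have hedge : ∀ i : ℤ, DEdge η (γ i) (γ (i + 1)) := fun i => by rw [hstep i]; exact hf (γ i)
  have hpred : ∀ n : ℤ, γ n = g (γ (n + 1)) := by
    intro n
    rw [hstep n]
    exact (hgf (γ n) (hγB n)).symm
  have hp1 : ∀ t : ℤ, γ (t - 1) = g (γ t) := by
    intro t
    have := hpred (t - 1)
    rwa [sub_add_cancel] at this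
  have htrans : ∀ i j : ℤ, γ i = γ j → ∀ m : ℤ, γ (i + m) = γ (j + m) := by
    intro i j hij m
    induction m using Int.induction_on with
    | zero => simpa using hij
    | succ m ih =>
      have e1 : i + ((m : ℤ) + 1) = (i + m) + 1 := by ring
      have e2 : j + ((m : ℤ) + 1) = (j + m) + 1 := by ring
      rw [e1, e2, hstep, hstep, ih]
    | pred m ih =>
      have e1 : i + (-(m : ℤ) - 1) = (i + -m) - 1 := by ring
      have e2 : j + (-(m : ℤ) - 1) = (j + -m) - 1 := by ring
      rw [e1, e2, hp1, hp1, ih]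
  have hγ0 : γ 0 = y₀ := by simpa using hγnat 0
  have hZero : ∀ k : ℤ, γ k = γ 0 → k = 0 := by
    intro k hk
    by_contra hkne
    have key : ∀ m : ℤ, 0 < m → γ m ≠ γ 0 := by
      intro m hm heq
      have hm1 : 1 ≤ m.toNat := by omega
      have hcyc : f^[m.toNat] y₀ = y₀ := by
        have hmm := hγnat m.toNat
        rw [Int.toNat_of_nonneg hm.le] at hmm
        rw [heq, hγ0] at hmm
        exact hmm.symm
      exact no_cycle h2 h3 f hf y₀ m.toNat hm1 hcyc
    rcases lt_trichotomy k 0 with hneg | rfl | hpos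
    · have := htrans k 0 hk (-k)
      simp only [add_neg_cancel, zero_add] at this
      exact key (-k) (by omega) this.symm
    · exact hkne rfl
    · exact key k hpos hk
  have hinj : Function.Injective γ := by
    intro i j hij
    have h := htrans i j hij (-i)
    simp only [add_neg_cancel] at h
    have := hZero (j + -i) h.symm
    omega
  have hWy₀ : ∀ n : ℤ, WeakConn η y₀ (γ n) := by
    intro n
    induction n using Int.induction_on with
    | zero => rw [hγ0]; exact Relation.ReflTransGen.refl
    | succ m ih => exact Relation.ReflTransGen.tail ih (Or.inl (hedge m))
    | pred m ih =>
      refine Relation.ReflTransGen.tail ih (Or.inr ?_)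
      have := hedge (-(m : ℤ) - 1)
      rwa [show -(m:ℤ) - 1 + 1 = -(m:ℤ) by ring] at this
  have hsymU : Symmetric (UAdj η) := fun a b hab => hab.elim Or.inr Or.inl
  have hsymW : ∀ u v : Vtx d, WeakConn η u v → WeakConn η v u :=
    fun u v h => by
      haveI : Std.Symm (UAdj η) := ⟨fun a b hab => hsymU hab⟩
      exact (Relation.ReflTransGen.stdSymm (r := UAdj η)).symm u v h
  have hmerge : ∀ u v : Vtx d, WeakConn η u v → ∃ n m : ℕ, f^[n] u = f^[m] v := by
    intro u v h
    induction h with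
    | refl => exact ⟨0, 0, rfl⟩
    | @tail b c hwc hadj ih =>
      obtain ⟨n, m, hnm⟩ := ih
      rcases hadj with hbc | hcb
      · have hc : c = f b := hfu b c hbc
        refine ⟨n + 1, m, ?_⟩
        rw [hc, ← Function.iterate_succ_apply, Function.iterate_succ_apply',
          Function.iterate_succ_apply', hnm]
      · have hb : b = f c := hfu c b hcb
        refine ⟨n, m + 1, ?_⟩
        rw [Function.iterate_succ_apply, ← hb, hnm]
  have htrace : ∀ (m : ℕ) (y : Vtx d), B y → ∀ t : ℤ, f^[m] y = γ t → y = γ (t - m) := by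
    intro m
    induction m with
    | zero => intro y _ t h; simpa using h
    | succ m ih =>
      intro y hyB t h
      have hfy : f^[m] (f y) = γ t := by rwa [← Function.iterate_succ_apply]
      have h5 := ih (f y) (hfB y hyB) t hfy
      have hy : y = g (γ (t - m)) := by rw [← h5, hgf y hyB]
      rw [hy, ← hp1]
      congr 1
      push_cast
      ring
  have hrange : Set.range γ = {y | WeakConn η x y ∧ (bwdCluster η y).Infinite} := by
    apply Set.eq_of_subset_of_subset
    · rintro _ ⟨n, rfl⟩
      exact ⟨Relation.ReflTransGen.trans hy₀.1 (hWy₀ n), hγB n⟩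
    · rintro y ⟨hyW, hyB⟩
      have hw : WeakConn η y₀ y := Relation.ReflTransGen.trans (hsymW x y₀ hy₀.1) hyW
      obtain ⟨n, m, hnm⟩ := hmerge y₀ y hw
      have hfy : f^[m] y = γ (n : ℤ) := by rw [← hnm, hγnat]
      exact ⟨(n : ℤ) - m, (htrace m y hyB n hfy).symm⟩
  exact ⟨γ, hinj, hrange, hedge⟩
end S0

/-- for a translation-invariant probability measure on directed
nearest-neighbor configurations on `ℤ^d` whose graph a.s. has out-degree one and is
undirected-acyclic, a.s. the backbone of every weak component is either empty or a
doubly-infinite directed path. -/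
theorem stmt0 (d : ℕ) (hd : 1 ≤ d)
    (ν : Measure (DConfig d)) [IsProbabilityMeasure ν]
    (hinv : ∀ z : Vtx d, MeasurePreserving (shiftD z) ν ν)
    (hgood : ∀ᵐ η ∂ν,
      (∀ x : Vtx d, ∃! y : Vtx d, DEdge η x y) ∧
      (∀ x y : Vtx d, ¬ (DEdge η x y ∧ DEdge η y x)) ∧
      (SimpleGraph.fromRel (DEdge η)).IsAcyclic) :
    ∀ᵐ η ∂ν, ∀ x : Vtx d,
      {y | WeakConn η x y ∧ (bwdCluster η y).Infinite} = ∅ ∨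
      ∃ γ : ℤ → Vtx d, Function.Injective γ ∧
        Set.range γ = {y | WeakConn η x y ∧ (bwdCluster η y).Infinite} ∧
        ∀ i : ℤ, DEdge η (γ i) (γ (i + 1)) := by
  have hnb := S0.ae_nobad ν hinv (hgood.mono (fun η h => h.1))
  filter_upwards [hgood, hnb] with η hg hnb' x
  obtain ⟨h1, h2, h3⟩ := hg
  exact S0.det η h1 h2 h3
    (fun x' y₁ y₂ hne hE1 hE2 => hnb' x' (S0.mem_BadSet.mpr ⟨y₁, y₂, hne, hE1, hE2⟩)) x
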